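/- arXiv:1502.04809 — 3 statements merged into one kernel-verified Lean document; each statement's English description precedes it below -/
import Mathlib

section
/- Let σ : [0,∞) → [0,∞) be a class L function (continuous, strictly decreasing, σ(t) → 0 as t → ∞). Define σ†(s) = σ⁻¹(s) for s ∈ (0, σ(0)] and σ†(s) = 0 for s ≥ σ(0), and define φ(s) = s·exp(-σ†(s)) for s > 0 with φ(0) = 0. Then φ is a class K∞ function. -/
open Set Filter

/-- A class-K∞ function: continuous, zero at zero, strictly increasing, nonnegative and
unbounded on `[0,∞)`. -/
def IsClassKInf (α : ℝ → ℝ) : Prop :=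
  ContinuousOn α (Ici 0) ∧ StrictMonoOn α (Ici 0) ∧ α 0 = 0 ∧ (∀ s ∈ Ici (0:ℝ), 0 ≤ α s) ∧
    Tendsto α atTop atTop

/-- Given a class L function `σ`, define `σ†(s) = σ⁻¹(s)` for `s ∈ (0, σ(0)]` and
`σ†(s) = 0` for `s ≥ σ(0)` (realized as `σ†(s) = inf {t ≥ 0 : σ(t) ≤ s}`), and
`φ(s) = s·exp(-σ†(s))` (so `φ(0) = 0`).  Then `φ` is class K∞. -/
theorem scaling_from_classL_is_classKInf (σ : ℝ → ℝ)
    (hcont : ContinuousOn σ (Ici 0)) (hanti : StrictAntiOn σ (Ici 0))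
    (hnonneg : ∀ t ∈ Ici (0:ℝ), 0 ≤ σ t) (hlim : Tendsto σ atTop (nhds 0)) :
    IsClassKInf (fun s => s * Real.exp (-(sInf {t : ℝ | 0 ≤ t ∧ σ t ≤ s}))) := by
  set S : ℝ → Set ℝ := fun s => {t : ℝ | 0 ≤ t ∧ σ t ≤ s} with hS
  set ψ : ℝ → ℝ := fun s => sInf (S s) with hψ
  -- σ is strictly positive on [0,∞)
  have hσpos : ∀ t, 0 ≤ t → 0 < σ t := by
    intro t ht
    rcases lt_or_eq_of_le (hnonneg t ht) with h | h
    · exact h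
    · exfalso
      have h1 : σ (t + 1) < σ t := hanti ht (by linarith : (0:ℝ) ≤ t + 1) (by linarith)
      have := hnonneg (t + 1) (by simp only [mem_Ici]; linarith)
      linarith [h.symm ▸ h1]
  have hbdd : ∀ s : ℝ, BddBelow (S s) := fun s => ⟨0, fun t ht => ht.1⟩
  have hne : ∀ s : ℝ, 0 < s → (S s).Nonempty := by
    intro s hs
    have h1 : ∀ᶠ t in atTop, σ t < s := hlim.eventually_lt_const hs
    have h2 : ∀ᶠ t in atTop, (0:ℝ) ≤ t := eventually_ge_atTop 0
    rcases (h1.and h2).exists with ⟨t, ht1, ht2⟩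
    exact ⟨t, ht2, ht1.le⟩
  have hψ_nonneg : ∀ s, 0 < s → 0 ≤ ψ s := fun s hs =>
    le_csInf (hne s hs) fun t ht => ht.1
  -- S s is closed
  have hSclosed : ∀ s, IsClosed (S s) := by
    intro s
    have : S s = Ici 0 ∩ σ ⁻¹' (Iic s) := by
      ext t
      simp only [hS, mem_setOf_eq, mem_inter_iff, mem_Ici, mem_preimage, mem_Iic]
    rw [this]
    exact hcont.preimage_isClosed_of_isClosed isClosed_Ici isClosed_Iic
  have hψ_mem : ∀ s, 0 < s → ψ s ∈ S s := fun s hs =>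
    (hSclosed s).csInf_mem (hne s hs) (hbdd s)
  -- ψ is antitone on positives
  have hψ_anti : ∀ s₁ s₂, 0 < s₁ → s₁ ≤ s₂ → ψ s₂ ≤ ψ s₁ := by
    intro s₁ s₂ h1 h12
    exact csInf_le_csInf (hbdd s₂) (hne s₁ h1) fun t ht => ⟨ht.1, ht.2.trans h12⟩
  -- ψ s = 0 for s ≥ σ 0
  have hψ_zero : ∀ s, σ 0 ≤ s → ψ s = 0 := by
    intro s hs
    have h0 : (0:ℝ) ∈ S s := ⟨le_refl 0, hs⟩
    have := csInf_le (hbdd s) h0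
    have h1 : 0 ≤ ψ s := hψ_nonneg s (lt_of_lt_of_le (hσpos 0 le_rfl) hs)
    linarith
  -- key equality: if ψ s > 0 then σ (ψ s) = s
  have hψ_eq : ∀ s, 0 < s → 0 < ψ s → σ (ψ s) = s := by
    intro s hs ht0
    have hmem := hψ_mem s hs
    rcases lt_or_eq_of_le hmem.2 with hlt | heq
    · exfalso
      -- σ continuous at ψ s, so a smaller point is also in S s
      have hca : ContinuousAt σ (ψ s) :=
        (hcont (ψ s) hmem.1).continuousAt (Ici_mem_nhds ht0)
      have hnb : σ ⁻¹' (Iio s) ∈ nhds (ψ s) := hca.preimage_mem_nhds (Iio_mem_nhds hlt)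
      rcases Metric.mem_nhds_iff.1 hnb with ⟨δ, hδ, hball⟩
      set t' : ℝ := max (ψ s - δ/2) 0 with ht'
      have ht'ball : t' ∈ Metric.ball (ψ s) δ := by
        rw [Metric.mem_ball, Real.dist_eq, abs_lt]
        have h1 : ψ s - δ/2 ≤ t' := le_max_left _ _
        have h2 : t' ≤ ψ s := max_le (by linarith) ht0.le
        constructor <;> linarith
      have ht'mem : t' ∈ S s := ⟨le_max_right _ _, (hball ht'ball).le⟩
      have hlt' : t' < ψ s := by
        apply max_lt (by linarith) ht0
      have := csInf_le (hbdd s) ht'mem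
      linarith
    · exact heq
  -- σ (ψ s) ≤ s always for s > 0, hence σ (ψ s) ≤ s gives σ (t) > s → ψ s ≥ ...
  -- Continuity of ψ at every a > 0
  have hψ_cont : ∀ a, 0 < a → ContinuousAt ψ a := by
    intro a ha
    rw [ContinuousAt, tendsto_order]
    constructor
    · -- ∀ b < ψ a, eventually b < ψ s
      intro b hb
      rcases lt_or_ge b 0 with hb0 | hb0
      · -- eventually s > 0, then ψ s ≥ 0 > b
        filter_upwards [Ioi_mem_nhds ha] with s hs
        exact lt_of_lt_of_le hb0 (hψ_nonneg s hs)
      · -- b ≥ 0, so ψ a > b ≥ 0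
        have ht0 : 0 < ψ a := lt_of_le_of_lt hb0 hb
        have heq : σ (ψ a) = a := hψ_eq a ha ht0
        set t₁ : ℝ := (b + ψ a) / 2 with ht₁
        have ht₁0 : 0 ≤ t₁ := by positivity
        have ht₁lt : t₁ < ψ a := by rw [ht₁]; linarith
        have hσt₁ : a < σ t₁ := by
          rw [← heq]; exact hanti ht₁0 (ht₁0.trans ht₁lt.le) ht₁lt
        filter_upwards [Ioo_mem_nhds ha hσt₁] with s hs
        have h1 : t₁ ≤ ψ s := by
          apply le_csInf (hne s hs.1)
          intro t ht
          by_contra hc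
          push_neg at hc
          have : σ t₁ < σ t := hanti ht.1 ht₁0 hc
          have := ht.2
          linarith [hs.2]
        linarith
    · -- ∀ b > ψ a, eventually ψ s < b
      intro b hb
      have hmem := hψ_mem a ha
      set t₂ : ℝ := (ψ a + b) / 2 with ht₂
      have ht₂0 : 0 ≤ t₂ := by have := hψ_nonneg a ha; rw [ht₂]; linarith
      have hlt : ψ a < t₂ := by rw [ht₂]; linarith
      have hσt₂ : σ t₂ < a := lt_of_lt_of_le (hanti hmem.1 ht₂0 hlt) hmem.2
      filter_upwards [Ioi_mem_nhds hσt₂] with s hs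
      have h1 : ψ s ≤ t₂ := csInf_le (hbdd s) ⟨ht₂0, le_of_lt hs⟩
      linarith
  refine ⟨?_, ?_, by simp, ?_, ?_⟩
  · -- continuity on Ici 0
    intro s hs
    rcases eq_or_lt_of_le (mem_Ici.1 hs) with h0 | hpos
    · -- continuity at 0 within Ici 0: squeeze between 0 and id
      rw [← h0]
      have hφ0 : (0:ℝ) * Real.exp (-(ψ 0)) = 0 := by ring
      rw [ContinuousWithinAt]
      have : Tendsto (fun s => s * Real.exp (-(ψ s))) (nhdsWithin 0 (Ici 0)) (nhds 0) := by
        apply tendsto_of_tendsto_of_tendsto_of_le_of_le' (tendsto_const_nhds (x := (0:ℝ)))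
          (tendsto_id.mono_left nhdsWithin_le_nhds)
        · filter_upwards [self_mem_nhdsWithin] with x hx
          exact mul_nonneg (mem_Ici.1 hx) (Real.exp_pos _).le
        · filter_upwards [self_mem_nhdsWithin] with x hx
          rcases eq_or_lt_of_le (mem_Ici.1 hx) with h | h
          · rw [← h]; ring_nf; simp
          · calc x * Real.exp (-(ψ x)) ≤ x * 1 := by
                  apply mul_le_mul_of_nonneg_left _ (le_of_lt h)
                  rw [Real.exp_le_one_iff]
                  linarith [hψ_nonneg x h]
              _ = x := mul_one x
      simpa [hφ0] using this
    · -- continuity at s > 0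
      apply ContinuousAt.continuousWithinAt
      exact continuousAt_id.mul (Real.continuous_exp.continuousAt.comp (hψ_cont s hpos).neg)
  · -- strict monotonicity on Ici 0
    intro a ha b hb hab
    simp only
    rcases eq_or_lt_of_le (mem_Ici.1 ha) with h0 | hpos
    · rw [← h0]
      have : (0:ℝ) * Real.exp (-(ψ 0)) = 0 := by ring
      rw [this]
      exact mul_pos (h0 ▸ hab) (Real.exp_pos _)
    · have hψba : ψ b ≤ ψ a := hψ_anti a b hpos hab.le
      calc a * Real.exp (-(ψ a)) ≤ a * Real.exp (-(ψ b)) := by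
            apply mul_le_mul_of_nonneg_left _ hpos.le
            exact Real.exp_le_exp.2 (by linarith)
        _ < b * Real.exp (-(ψ b)) := by
            exact mul_lt_mul_of_pos_right hab (Real.exp_pos _)
  · -- nonnegativity
    intro s hs
    exact mul_nonneg (mem_Ici.1 hs) (Real.exp_pos _).le
  · -- tends to infinity : φ s = s eventually
    apply Tendsto.congr' _ tendsto_id
    filter_upwards [eventually_ge_atTop (σ 0)] with s hs
    show id s = s * Real.exp (-(ψ s))
    rw [hψ_zero s hs]
    simp
end

section
/- For the differential inclusion x' ∈ closed unit ball of ℝ², with A the unit circle {x ∈ ℝ² : |x| = 1}, there is no continuously differentiable function V : ℝ² → [0,∞) together with class K∞ functions α₁, α₂ satisfying α₁(d(x,A)) ≤ V(x) ≤ α₂(d(x,A)) for all x and min_{|w| ≤ 1} ⟨∇V(x), w⟩ ≤ -V(x) for all x. -/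
open Set Filter

/-- For the differential inclusion `x' ∈ closed unit ball` in `ℝ²`, with `A` the unit
circle, there is no continuously differentiable weak Lyapunov function for `A`: no C¹
function `V : ℝ² → [0,∞)` with `α₁(d(x,A)) ≤ V(x) ≤ α₂(d(x,A))` for class K∞ `α₁,α₂` and
`min_{‖w‖ ≤ 1} ⟨∇V(x), w⟩ ≤ -V(x)` for all `x`. -/
theorem no_smooth_weak_lyapunov_for_circle :
    ¬ ∃ (V : EuclideanSpace ℝ (Fin 2) → ℝ) (α₁ α₂ : ℝ → ℝ),
      ContDiff ℝ 1 V ∧ (∀ x, 0 ≤ V x) ∧ IsClassKInf α₁ ∧ IsClassKInf α₂ ∧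
      (∀ x, α₁ (Metric.infDist x (Metric.sphere (0 : EuclideanSpace ℝ (Fin 2)) 1)) ≤ V x ∧
            V x ≤ α₂ (Metric.infDist x (Metric.sphere (0 : EuclideanSpace ℝ (Fin 2)) 1))) ∧
      (∀ x, ∃ w : EuclideanSpace ℝ (Fin 2), ‖w‖ ≤ 1 ∧ fderiv ℝ V x w ≤ -V x) := by
  rintro ⟨V, α₁, α₂, hV, hV0, hK1, hK2, hbound, hdec⟩
  set A := Metric.sphere (0 : EuclideanSpace ℝ (Fin 2)) 1 with hA
  -- V vanishes on the sphere
  have hVsphere : ∀ x ∈ A, V x = 0 := by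
    intro x hx
    have h := (hbound x).2
    rw [Metric.infDist_zero_of_mem hx, hK2.2.2.1] at h
    exact le_antisymm h (hV0 x)
  have hAne : A.Nonempty := NormedSpace.sphere_nonempty.mpr zero_le_one
  -- distance from 0 to the sphere is 1
  have hdmem : ∀ y ∈ A, dist (0 : EuclideanSpace ℝ (Fin 2)) y = 1 := by
    intro y hy
    rw [hA, Metric.mem_sphere] at hy
    rw [dist_comm]; exact hy
  have hd0 : Metric.infDist (0 : EuclideanSpace ℝ (Fin 2)) A = 1 := by
    obtain ⟨y, hy⟩ := id hAne
    refine le_antisymm ((hdmem y hy) ▸ Metric.infDist_le_dist_of_mem hy) ?_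
    by_contra h
    push_neg at h
    obtain ⟨z, hz, hzlt⟩ := (Metric.infDist_lt_iff hAne).mp h
    rw [hdmem z hz] at hzlt
    exact lt_irrefl 1 hzlt
  -- V 0 > 0
  have hα₁pos : 0 < α₁ 1 := by
    have := hK1.2.1 (self_mem_Ici) (by norm_num : (1:ℝ) ∈ Ici (0:ℝ)) one_pos
    rwa [hK1.2.2.1] at this
  have hV0pos : 0 < V 0 := by
    have := (hbound 0).1
    rw [hd0] at this
    linarith
  -- max on the closed ball
  obtain ⟨x, hxmem, hxmax⟩ :=
    (isCompact_closedBall (0 : EuclideanSpace ℝ (Fin 2)) 1).exists_isMaxOn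
      ⟨0, Metric.mem_closedBall_self zero_le_one⟩ hV.continuous.continuousOn
  have hVx : V 0 ≤ V x := hxmax (Metric.mem_closedBall_self zero_le_one)
  have hxball : x ∈ Metric.ball (0 : EuclideanSpace ℝ (Fin 2)) 1 := by
    rcases lt_or_eq_of_le (Metric.mem_closedBall.mp hxmem) with h | h
    · exact Metric.mem_ball.mpr h
    · exfalso
      have hxA : x ∈ A := by rw [hA, Metric.mem_sphere]; exact h
      have : V x = 0 := hVsphere x hxA
      linarith
  have hlocal : IsLocalMax V x :=
    hxmax.isLocalMax (Filter.mem_of_superset (Metric.isOpen_ball.mem_nhds hxball)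
      Metric.ball_subset_closedBall)
  have hgrad : fderiv ℝ V x = 0 := hlocal.fderiv_eq_zero
  obtain ⟨w, hw, hle⟩ := hdec x
  rw [hgrad] at hle
  simp at hle
  linarith
end

section
/- Let V : ℝⁿ × ℝ → ℝ be continuously differentiable, positive definite (there exists class K α₁ with α₁(|x|) ≤ V(x,t) for all x, t) and decrescent (there exists class K α₂ with V(x,t) ≤ α₂(|x|)). Suppose along a solution x : [t₀,∞) → ℝⁿ of x' = f(x,t), d/dt V(x(t),t) ≤ 0 for all t ≥ t₀. Then |x(t)| ≤ α₁⁻¹(α₂(|x(0 at t₀)|)) for all t ≥ t₀, where |x(t₀)| is small enough that α₂(|x(t₀)|) is in the range of α₁; i.e., the origin is uniformly stable. -/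
open Set Filter

/-- A class-K function: continuous, zero at zero, strictly increasing on `[0,∞)` with
nonnegative values there. -/
def IsClassK (α : ℝ → ℝ) : Prop :=
  ContinuousOn α (Ici 0) ∧ StrictMonoOn α (Ici 0) ∧ α 0 = 0 ∧ ∀ s ∈ Ici (0:ℝ), 0 ≤ α s

/-- Uniform stability via Lyapunov's second method: if `V(x,t)` is continuously
differentiable, positive definite (`α₁(‖x‖) ≤ V(x,t)`) and decrescent
(`V(x,t) ≤ α₂(‖x‖)`) for class K functions `α₁, α₂`, and nonincreasing along a solution
`x` of `x' = f(x,t)`, then `‖x(t)‖ ≤ α₁⁻¹(α₂(‖x(t₀)‖))` for all `t ≥ t₀`, whenever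
`α₂(‖x(t₀)‖)` lies in the range of `α₁` (expressed by: whenever `s ≥ 0` satisfies
`α₁(s) = α₂(‖x(t₀)‖)`, we have `‖x(t)‖ ≤ s`). -/
theorem lyapunov_uniform_stability {n : ℕ}
    (f : EuclideanSpace ℝ (Fin n) → ℝ → EuclideanSpace ℝ (Fin n))
    (hf0 : ∀ t : ℝ, f 0 t = 0)
    (V : EuclideanSpace ℝ (Fin n) → ℝ → ℝ)
    (hV : ContDiff ℝ 1 (fun p : EuclideanSpace ℝ (Fin n) × ℝ => V p.1 p.2))
    (α₁ α₂ : ℝ → ℝ) (hα₁ : IsClassK α₁) (hα₂ : IsClassK α₂)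
    (hbound : ∀ x t, α₁ ‖x‖ ≤ V x t ∧ V x t ≤ α₂ ‖x‖)
    (t₀ : ℝ) (x : ℝ → EuclideanSpace ℝ (Fin n))
    (hsol : ∀ t ≥ t₀, HasDerivAt x (f (x t) t) t)
    (hdecr : ∀ t ≥ t₀, deriv (fun s => V (x s) s) t ≤ 0)
    (hrange : α₂ ‖x t₀‖ ∈ α₁ '' (Ici 0)) :
    ∀ s ∈ Ici (0:ℝ), α₁ s = α₂ ‖x t₀‖ → ∀ t ≥ t₀, ‖x t‖ ≤ s := by
  intro s hs hseq t ht
  -- g(t) = V(x t, t) is differentiable at each t ≥ t₀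
  have hdiff : ∀ u ≥ t₀, DifferentiableAt ℝ (fun r => V (x r) r) u := by
    intro u hu
    have h1 : HasDerivAt (fun r => (x r, r)) (f (x u) u, 1) u :=
      (hsol u hu).prodMk (hasDerivAt_id u)
    have h2 : DifferentiableAt ℝ (fun p : EuclideanSpace ℝ (Fin n) × ℝ => V p.1 p.2)
        (x u, u) := hV.differentiable one_ne_zero |>.differentiableAt
    have hc : DifferentiableAt ℝ ((fun p : EuclideanSpace ℝ (Fin n) × ℝ => V p.1 p.2) ∘
        (fun r => (x r, r))) u :=
      DifferentiableAt.comp (f := fun r => (x r, r)) u h2 h1.differentiableAt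
    exact hc
  have hanti : AntitoneOn (fun r => V (x r) r) (Ici t₀) := by
    apply antitoneOn_of_deriv_nonpos (convex_Ici t₀)
    · intro u hu
      exact (hdiff u hu).continuousAt.continuousWithinAt
    · intro u hu
      rw [interior_Ici] at hu
      exact ((hdiff u hu.le).differentiableWithinAt)
    · intro u hu
      rw [interior_Ici] at hu
      exact hdecr u hu.le
  have key : α₁ ‖x t‖ ≤ α₁ s := by
    calc α₁ ‖x t‖ ≤ V (x t) t := (hbound (x t) t).1
    _ ≤ V (x t₀) t₀ := hanti self_mem_Ici ht ht
    _ ≤ α₂ ‖x t₀‖ := (hbound (x t₀) t₀).2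
    _ = α₁ s := hseq.symm
  by_contra h
  push_neg at h
  have := hα₁.2.1 hs (le_trans hs h.le) h
  linarith
end
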